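/- arXiv:1812.00567 — 2 statements merged into one kernel-verified Lean document; each statement's English description precedes it below -/
import Mathlib

section
/- Every subgroup of a free group that is isomorphic to ℤ × ℤ is trivial; equivalently, if two elements of a free group commute and generate a subgroup isomorphic to ℤ², we get a contradiction: any two commuting elements of a free group lie in a common cyclic subgroup. -/
open Subgroup

lemma freeGroup_of_eq_of_commute {β : Type*} {x y : β}
    (h : FreeGroup.of x * FreeGroup.of y = FreeGroup.of y * FreeGroup.of x) : x = y := by
  classical
  by_contra hxy
  let f : β → Equiv.Perm (Fin 3) := fun z =>
    if z = x then Equiv.swap 0 1 else if z = y then Equiv.swap 1 2 else 1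
  have := congrArg (FreeGroup.lift f) h
  simp only [map_mul, FreeGroup.lift_apply_of] at this
  have hfx : f x = Equiv.swap 0 1 := by simp [f]
  have hfy : f y = Equiv.swap 1 2 := by simp [f, hxy, Ne.symm hxy]
  rw [hfx, hfy] at this
  exact absurd this (by decide)

lemma isCyclic_freeGroup_of_subsingleton {β : Type*} [Subsingleton β] :
    IsCyclic (FreeGroup β) := by
  rcases isEmpty_or_nonempty β with hβ | ⟨⟨d⟩⟩
  · have : Subsingleton (FreeGroup β) := by
      constructor
      have key : ∀ z : FreeGroup β, z = 1 := by
        intro z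
        refine FreeGroup.induction_on z rfl (fun x => (hβ.false x).elim) ?_ ?_
        · intro x ih; rw [ih, inv_one]
        · intro x y hx hy; rw [hx, hy, one_mul]
      intro a b; rw [key a, key b]
    exact isCyclic_of_subsingleton
  · refine ⟨⟨FreeGroup.of d, fun z => ?_⟩⟩
    have : z ∈ Subgroup.zpowers (FreeGroup.of d) := by
      refine FreeGroup.induction_on z (one_mem _) (fun x => ?_) ?_ ?_
      · rw [Subsingleton.elim x d]; exact Subgroup.mem_zpowers _
      · intro x hx; exact inv_mem hx
      · intro x y hx hy; exact mul_mem hx hy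
    exact this

/-- Any two commuting elements of a free group lie in a common cyclic subgroup:
the subgroup they generate is cyclic (in particular not isomorphic to `ℤ × ℤ`). -/
theorem commuting_elements_of_free_group_generate_cyclic (α : Type)
    (a b : FreeGroup α) (h : a * b = b * a) :
    IsCyclic (Subgroup.closure ({a, b} : Set (FreeGroup α))) := by
  set H := Subgroup.closure ({a, b} : Set (FreeGroup α)) with hH
  -- H is commutative
  have hcomm : ∀ x y : H, x * y = y * x := by
    rintro ⟨x, hx⟩ ⟨y, hy⟩
    ext
    show x * y = y * x
    induction hx, hy using Subgroup.closure_induction₂ with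
    | mem u v hu hv =>
      rcases hu with rfl | rfl <;> rcases hv with rfl | rfl
      · rfl
      · exact h
      · exact h.symm
      · rfl
    | one_left u hu => simp
    | one_right u hu => simp
    | mul_left u v w hu hv hw h1 h2 => rw [mul_assoc, h2, ← mul_assoc, h1, mul_assoc]
    | mul_right u v w hu hv hw h1 h2 => rw [← mul_assoc, h1, mul_assoc, h2, ← mul_assoc]
    | inv_left u v hu hv h1 => exact (Commute.inv_left h1).eq
    | inv_right u v hu hv h1 => exact (Commute.inv_right h1).eq
  haveI : IsFreeGroup H := inferInstance
  let e := IsFreeGroup.toFreeGroup H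
  have hsub : Subsingleton (IsFreeGroup.Generators H) := by
    constructor
    intro i j
    apply freeGroup_of_eq_of_commute (x := i) (y := j)
    have := hcomm (e.symm (FreeGroup.of i)) (e.symm (FreeGroup.of j))
    rw [← map_mul, ← map_mul] at this
    exact e.symm.injective this
  haveI := hsub
  haveI : IsCyclic (FreeGroup (IsFreeGroup.Generators H)) := isCyclic_freeGroup_of_subsingleton
  exact isCyclic_of_surjective e.symm e.symm.surjective
end

section
/- In an amalgamated free product A *_C B where the images of a generating set of C form parts of free bases of A and B, if A and B are free and C is free with basis mapping to subsets of the bases of A and B, then A *_C B is free. -/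
open Monoid

section Aux

variable (ι γ : Type) (β : ι → Type) (f : ∀ i, γ → β i)

/-- The pushout of the types: vertices are basis elements of the `β i` and of `γ`,
identified along `f`. -/
inductive PRel : ((Σ i, β i) ⊕ γ) → ((Σ i, β i) ⊕ γ) → Prop
  | mk (i : ι) (c : γ) : PRel (Sum.inl ⟨i, f i c⟩) (Sum.inr c)

abbrev Q := Quot (PRel ι γ β f)

/-- Map from the free group on the type pushout to the group pushout. -/
def toPush : FreeGroup (Q ι γ β f) →* PushoutI (fun i => FreeGroup.map (f i)) :=
  FreeGroup.lift <| Quot.lift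
    (fun x => match x with
      | Sum.inl ⟨i, b⟩ => PushoutI.of (φ := fun i => FreeGroup.map (f i)) i (FreeGroup.of b)
      | Sum.inr c => PushoutI.base (fun i => FreeGroup.map (f i)) (FreeGroup.of c))
    (by
      rintro _ _ ⟨i, c⟩
      have := PushoutI.of_apply_eq_base (φ := fun i => FreeGroup.map (f i)) i (FreeGroup.of c)
      simpa using this)

/-- Map from the group pushout to the free group on the type pushout. -/
def toFree : PushoutI (fun i => FreeGroup.map (f i)) →* FreeGroup (Q ι γ β f) :=
  PushoutI.lift
    (fun i => FreeGroup.map fun b => Quot.mk _ (Sum.inl ⟨i, b⟩))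
    (FreeGroup.map fun c => Quot.mk _ (Sum.inr c))
    (by
      intro i
      ext c
      simp only [MonoidHom.comp_apply, FreeGroup.map.of]
      exact congrArg FreeGroup.of (Quot.sound (PRel.mk i c)))

theorem toPush_toFree (x : PushoutI (fun i => FreeGroup.map (f i))) :
    toPush ι γ β f (toFree ι γ β f x) = x := by
  have : (toPush ι γ β f).comp (toFree ι γ β f) = MonoidHom.id _ := by
    apply PushoutI.hom_ext
    · intro i
      ext b
      simp [toFree, toPush]
    · ext c
      simp [toFree, toPush]
  exact DFunLike.congr_fun this x

theorem toFree_toPush (x : FreeGroup (Q ι γ β f)) :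
    toFree ι γ β f (toPush ι γ β f x) = x := by
  have : (toFree ι γ β f).comp (toPush ι γ β f) = MonoidHom.id _ := by
    ext q
    induction q using Quot.ind with
    | _ x =>
      rcases x with ⟨i, b⟩ | c <;> simp [toFree, toPush]
  exact DFunLike.congr_fun this x

end Aux

/-- An amalgamated free product (pushout) of free groups `A i = FreeGroup (β i)` over a
free group `C = FreeGroup γ`, where each map `C → A i` is induced by an injection of the
basis `γ` into the basis `β i`, is a free group. -/
theorem pushout_of_free_along_free_basis_is_free (ι γ : Type) (β : ι → Type)
    (f : ∀ i, γ → β i) (hf : ∀ i, Function.Injective (f i)) :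
    IsFreeGroup (Monoid.PushoutI fun i => FreeGroup.map (f i)) := by
  exact IsFreeGroup.ofMulEquiv
    (MulEquiv.mk (Equiv.mk (toPush ι γ β f) (toFree ι γ β f)
      (toFree_toPush ι γ β f) (toPush_toFree ι γ β f)) (map_mul (toPush ι γ β f)))
end
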